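/- Let i ≥ 5, and suppose that for every j with 5 ≤ j ≤ i, the Fermat number N_j is the smallest positive integer m satisfying (c_j)^m ∈ L_{j−1}. Then O(a_i) = O(c_i) = ∏_{j=1}^{i} N_j. -/
import Mathlib


/-- The `j`-th Fermat number `N_j = 2^(2^j) + 1`. -/
def fermatN (j : ℕ) : ℕ := 2 ^ 2 ^ j + 1

/-- `conwayL c n` is the subfield `L_{n-1}` of the algebraic closure of `F_2`
generated over `F_2` by `c 0, …, c (n-1)`; in particular `conwayL c 0 = ⊥ = F_2`. -/
noncomputable def conwayL (c : ℕ → AlgebraicClosure (ZMod 2)) (n : ℕ) :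
    IntermediateField (ZMod 2) (AlgebraicClosure (ZMod 2)) :=
  IntermediateField.adjoin (ZMod 2) (c '' Set.Iio n)

namespace ConwayAux

open IntermediateField Polynomial Finset

abbrev F2b := AlgebraicClosure (ZMod 2)

lemma two_eq_zero : (2 : F2b) = 0 := by
  have : CharP F2b 2 := inferInstance
  exact_mod_cast CharP.cast_eq_zero F2b 2

variable (c : ℕ → F2b)

lemma recAll (hc0 : c 0 ^ 2 + c 0 + 1 = 0)
    (hrec : ∀ i : ℕ, c (i + 1) ^ 2 + c (i + 1) + ∏ j ∈ Finset.range (i + 1), c j = 0) :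
    ∀ n, c n ^ 2 + c n + ∏ j ∈ Finset.range n, c j = 0 := by
  intro n
  cases n with
  | zero => simpa using hc0
  | succ n => exact hrec n

lemma prodMem (n : ℕ) : (∏ j ∈ Finset.range n, c j) ∈ conwayL c n := by
  refine prod_mem fun j hj => ?_
  exact IntermediateField.subset_adjoin _ _ ⟨j, Finset.mem_range.mp hj, rfl⟩

lemma notMem (hc0 : c 0 ^ 2 + c 0 + 1 = 0)
    (hnot : ∀ i : ℕ, c (i + 1) ∉ conwayL c (i + 1)) :
    ∀ n, c n ∉ conwayL c n := by
  intro n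
  cases n with
  | succ n => exact hnot n
  | zero =>
    intro h
    have hL : conwayL c 0 = ⊥ := by
      rw [conwayL]
      have : Set.Iio (0:ℕ) = ∅ := by ext x; simp
      rw [this, Set.image_empty, IntermediateField.adjoin_empty]
    rw [hL, IntermediateField.mem_bot] at h
    obtain ⟨z, hz⟩ := h
    have hzz : ∀ w : ZMod 2, w ^ 2 = w := by decide
    have hsq : c 0 ^ 2 = c 0 := by rw [← hz, ← map_pow, hzz]
    apply one_ne_zero (α := F2b)
    linear_combination hc0 - hsq - c 0 * two_eq_zero

lemma cNeZero (hc0 : c 0 ^ 2 + c 0 + 1 = 0)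
    (hnot : ∀ i : ℕ, c (i + 1) ∉ conwayL c (i + 1)) (n : ℕ) : c n ≠ 0 := by
  intro h
  exact notMem c hc0 hnot n (h ▸ zero_mem _)

lemma finDim (n : ℕ) : FiniteDimensional (ZMod 2) (conwayL c n) := by
  rw [conwayL]
  have : Finite ↥(c '' Set.Iio n) := Set.Finite.to_subtype ((Set.finite_Iio n).image c)
  exact IntermediateField.finiteDimensional_adjoin fun x _ =>
    Algebra.IsIntegral.isIntegral x

lemma finiteL (n : ℕ) : Finite (conwayL c n) := by
  have := finDim c n
  exact Module.finite_of_finite (ZMod 2)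

lemma conwayL_succ (n : ℕ) :
    conwayL c (n + 1) =
      (IntermediateField.adjoin (conwayL c n) {c n}).restrictScalars (ZMod 2) := by
  rw [conwayL, conwayL, IntermediateField.adjoin_adjoin_left]
  congr 1
  rw [← Set.image_singleton, ← Set.image_union]
  congr 1
  ext x
  simp [Nat.lt_succ_iff_lt_or_eq, le_iff_lt_or_eq]

set_option synthInstance.maxHeartbeats 1000000 in
lemma cardL (hc0 : c 0 ^ 2 + c 0 + 1 = 0)
    (hrec : ∀ i : ℕ, c (i + 1) ^ 2 + c (i + 1) + ∏ j ∈ Finset.range (i + 1), c j = 0)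
    (hnot : ∀ i : ℕ, c (i + 1) ∉ conwayL c (i + 1)) :
    ∀ n, Nat.card (conwayL c n) = 2 ^ 2 ^ n := by
  intro n
  induction n with
  | zero =>
    have hL : conwayL c 0 = ⊥ := by
      rw [conwayL]
      have : Set.Iio (0:ℕ) = ∅ := by ext x; simp
      rw [this, Set.image_empty, IntermediateField.adjoin_empty]
    rw [hL, Nat.card_congr (IntermediateField.botEquiv (ZMod 2) F2b).toEquiv, Nat.card_zmod]
    norm_num
  | succ n ih =>
    haveI := finDim c n
    haveI : Finite (conwayL c n) := finiteL c n
    set K := conwayL c n with hK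
    have haK : (∏ j ∈ Finset.range n, c j) ∈ K := prodMem c n
    set a : F2b := ∏ j ∈ Finset.range n, c j with ha
    set f : Polynomial K := X ^ 2 + (X + C ⟨a, haK⟩) with hf
    have hdlt : (X + C (⟨a, haK⟩ : K)).degree < (X ^ 2 : Polynomial K).degree := by
      rw [degree_X_pow, degree_X_add_C]
      norm_num
    have hmono : f.Monic := by
      apply monic_X_pow_add
      rw [degree_X_add_C]
      exact_mod_cast one_lt_two
    have hdegf : f.natDegree = 2 := by
      have h2 : f.degree = 2 := by
        rw [hf, degree_add_eq_left_of_degree_lt hdlt, degree_X_pow]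
        norm_num
      exact natDegree_eq_of_degree_eq_some h2
    have heval : aeval (c n) f = 0 := by
      have h := recAll c hc0 hrec n
      simp only [hf, map_add, aeval_X_pow, aeval_X, aeval_C,
        IntermediateField.algebraMap_apply]
      rw [← add_assoc]
      exact h
    have hint : IsIntegral K (c n) :=
      IsIntegral.tower_top (Algebra.IsIntegral.isIntegral (R := ZMod 2) (c n))
    have hdvd : minpoly K (c n) ∣ f := minpoly.dvd K (c n) heval
    have hle : (minpoly K (c n)).natDegree ≤ 2 := by
      have := natDegree_le_of_dvd hdvd hmono.ne_zero
      rwa [hdegf] at this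
    have hge : 2 ≤ (minpoly K (c n)).natDegree := by
      refine (minpoly.two_le_natDegree_iff hint).mpr ?_
      rintro ⟨x, hx⟩
      exact notMem c hc0 hnot n (hx ▸ x.2)
    have hfd2 : Module.finrank K K⟮c n⟯ = 2 := by
      rw [IntermediateField.adjoin.finrank hint]
      omega
    haveI : FiniteDimensional K K⟮c n⟯ := IntermediateField.adjoin.finiteDimensional hint
    haveI : Finite K⟮c n⟯ := Module.finite_of_finite K
    letI : Fintype K := Fintype.ofFinite K
    letI : Fintype K⟮c n⟯ := Fintype.ofFinite _
    have hcard : Fintype.card K⟮c n⟯ = Fintype.card K ^ 2 := by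
      rw [Module.card_eq_pow_finrank (K := K) (V := K⟮c n⟯), hfd2]
    have hres : Nat.card (conwayL c (n+1)) = Nat.card K⟮c n⟯ := by
      rw [conwayL_succ c n]
      rfl
    rw [hres, Nat.card_eq_fintype_card, hcard, ← Nat.card_eq_fintype_card, ih,
      ← pow_mul, ← pow_succ]

lemma mem_of_pow_card {K : IntermediateField (ZMod 2) F2b} [Fintype K] {x : F2b}
    (hq : 1 < Fintype.card K) (hx : x ^ Fintype.card K = x) : x ∈ K := by
  letI := Classical.decEq F2b
  set q := Fintype.card K with hqdef
  set P : Polynomial F2b := X ^ q - X with hP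
  have hdlt : (X : Polynomial F2b).degree < (X ^ q : Polynomial F2b).degree := by
    rw [degree_X_pow, degree_X]
    exact_mod_cast hq
  have hPdeg : P.degree = q := by
    rw [hP, degree_sub_eq_left_of_degree_lt hdlt, degree_X_pow]
  have hPnat : P.natDegree = q := natDegree_eq_of_degree_eq_some hPdeg
  have hPne : P ≠ 0 := by
    intro h
    rw [h, degree_zero] at hPdeg
    exact absurd hPdeg (by simp)
  set T := P.roots.toFinset with hT
  set KF := Finset.univ.image (fun u : K => (u : F2b)) with hKF
  have hKFcard : KF.card = q := by
    rw [hKF, Finset.card_image_of_injective _ Subtype.val_injective, Finset.card_univ]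
  have hsub : KF ⊆ T := by
    intro u hu
    simp only [hKF, Finset.mem_image, Finset.mem_univ, true_and] at hu
    obtain ⟨v, rfl⟩ := hu
    have hv : (v : F2b) ^ q = v := by
      simpa using congrArg Subtype.val (FiniteField.pow_card v)
    rw [hT, Multiset.mem_toFinset, mem_roots hPne]
    simp [hP, Polynomial.IsRoot, sub_eq_zero, hv]
  have hTcard : T.card ≤ q :=
    le_trans (Multiset.toFinset_card_le _) (le_trans (Polynomial.card_roots' P) (le_of_eq hPnat))
  have heq : KF = T := Finset.eq_of_subset_of_card_le hsub (by omega)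
  have hxT : x ∈ T := by
    rw [hT, Multiset.mem_toFinset, mem_roots hPne]
    simp [hP, Polynomial.IsRoot, sub_eq_zero, hx]
  rw [← heq] at hxT
  simp only [hKF, Finset.mem_image, Finset.mem_univ, true_and] at hxT
  obtain ⟨v, rfl⟩ := hxT
  exact v.2

lemma key (hc0 : c 0 ^ 2 + c 0 + 1 = 0)
    (hrec : ∀ i : ℕ, c (i + 1) ^ 2 + c (i + 1) + ∏ j ∈ Finset.range (i + 1), c j = 0)
    (hnot : ∀ i : ℕ, c (i + 1) ∉ conwayL c (i + 1)) :
    ∀ n, c n ^ fermatN n = ∏ j ∈ Finset.range n, c j := by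
  intro n
  haveI := finDim c n
  haveI : Finite (conwayL c n) := finiteL c n
  letI : Fintype (conwayL c n) := Fintype.ofFinite _
  set q := 2 ^ 2 ^ n with hq
  have hcard : Fintype.card (conwayL c n) = q := by
    rw [← Nat.card_eq_fintype_card, cardL c hc0 hrec hnot n]
  have hrecn := recAll c hc0 hrec n
  set a : F2b := ∏ j ∈ Finset.range n, c j with ha
  have haK : a ∈ conwayL c n := prodMem c n
  have hafix : a ^ q = a := by
    have h := FiniteField.pow_card (⟨a, haK⟩ : conwayL c n)
    rw [hcard] at h
    simpa using congrArg Subtype.val h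
  have hphi : (c n ^ q) ^ 2 + c n ^ q + a = 0 := by
    have h0 : (c n ^ 2 + c n + a) ^ q = 0 := by
      rw [hrecn]
      exact zero_pow (by positivity)
    have e1 : (c n ^ 2 + c n + a) ^ q = (c n ^ q) ^ 2 + c n ^ q + a ^ q := by
      rw [hq, add_pow_char_pow, add_pow_char_pow, ← pow_mul, mul_comm 2, pow_mul]
    rw [e1, hafix] at h0
    exact h0
  have hfac : (c n ^ q + c n) * (c n ^ q + c n + 1) = 0 := by
    linear_combination hphi + hrecn + (c n ^ q * c n - a) * two_eq_zero
  rcases mul_eq_zero.mp hfac with h | h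
  · exfalso
    have h1 : (1:ℕ) < Fintype.card (conwayL c n) := by
      rw [hcard, hq]
      exact Nat.one_lt_two_pow (by positivity)
    have h2 : c n ^ Fintype.card (conwayL c n) = c n := by
      rw [hcard]
      linear_combination h - c n * two_eq_zero
    exact notMem c hc0 hnot n (mem_of_pow_card h1 h2)
  · have hy : c n ^ q = c n + 1 := by linear_combination h - (c n + 1) * two_eq_zero
    have hfin : c n ^ (q + 1) = a := by
      rw [pow_succ, hy]
      linear_combination hrecn - a * two_eq_zero
    exact hfin

lemma least_dvd {x : F2b} (hx : x ≠ 0) {K : IntermediateField (ZMod 2) F2b} {d m : ℕ}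
    (hd : IsLeast {m : ℕ | 0 < m ∧ x ^ m ∈ K} d) (hm : 0 < m) (hxm : x ^ m ∈ K) : d ∣ m := by
  obtain ⟨⟨hd0, hdK⟩, hleast⟩ := hd
  by_contra hcon
  have hr0 : 0 < m % d := Nat.pos_of_ne_zero fun h => hcon (Nat.dvd_of_mod_eq_zero h)
  have hrd : m % d < d := Nat.mod_lt _ hd0
  have hsplit : (x ^ d) ^ (m / d) * x ^ (m % d) = x ^ m := by
    rw [← pow_mul, ← pow_add, Nat.div_add_mod]
  have hne : (x ^ d) ^ (m / d) ≠ 0 := pow_ne_zero _ (pow_ne_zero _ hx)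
  have hmem : ((x ^ d) ^ (m / d)) ∈ K := pow_mem hdK _
  have hxr : x ^ (m % d) ∈ K := by
    have h2 : x ^ (m % d) = ((x ^ d) ^ (m / d))⁻¹ * ((x ^ d) ^ (m / d) * x ^ (m % d)) :=
      (inv_mul_cancel_left₀ hne _).symm
    rw [h2, hsplit]
    exact mul_mem (inv_mem hmem) hxm
  exact absurd (hleast ⟨hr0, hxr⟩) (not_le.mpr hrd)

lemma order_split {x : F2b} (hx : x ≠ 0) {K : IntermediateField (ZMod 2) F2b} {d : ℕ}
    (hd : IsLeast {m : ℕ | 0 < m ∧ x ^ m ∈ K} d) (ho : 0 < orderOf x) :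
    orderOf x = d * orderOf (x ^ d) := by
  have hdvd : d ∣ orderOf x :=
    least_dvd hx hd ho (by rw [pow_orderOf_eq_one]; exact one_mem K)
  rw [orderOf_pow_of_dvd hd.1.1.ne' hdvd, Nat.mul_div_cancel' hdvd]

lemma finOrdProd (hc0 : c 0 ^ 2 + c 0 + 1 = 0)
    (hrec : ∀ i : ℕ, c (i + 1) ^ 2 + c (i + 1) + ∏ j ∈ Finset.range (i + 1), c j = 0)
    (hnot : ∀ i : ℕ, c (i + 1) ∉ conwayL c (i + 1)) :
    ∀ n, IsOfFinOrder (∏ j ∈ Finset.range n, c j) := by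
  intro n
  induction n with
  | zero => simpa using isOfFinOrder_one
  | succ n ih =>
    rw [Finset.prod_range_succ]
    refine ih.mul ?_
    obtain ⟨k, hk0, hk1⟩ := isOfFinOrder_iff_pow_eq_one.mp ih
    refine isOfFinOrder_iff_pow_eq_one.mpr ⟨fermatN n * k, Nat.mul_pos (by unfold fermatN; positivity) hk0, ?_⟩
    rw [pow_mul, key c hc0 hrec hnot n, hk1]

lemma finOrdC (hc0 : c 0 ^ 2 + c 0 + 1 = 0)
    (hrec : ∀ i : ℕ, c (i + 1) ^ 2 + c (i + 1) + ∏ j ∈ Finset.range (i + 1), c j = 0)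
    (hnot : ∀ i : ℕ, c (i + 1) ∉ conwayL c (i + 1)) (n : ℕ) :
    IsOfFinOrder (c n) := by
  obtain ⟨k, hk0, hk1⟩ := isOfFinOrder_iff_pow_eq_one.mp (finOrdProd c hc0 hrec hnot n)
  refine isOfFinOrder_iff_pow_eq_one.mpr ⟨fermatN n * k, Nat.mul_pos (by unfold fermatN; positivity) hk0, ?_⟩
  rw [pow_mul, key c hc0 hrec hnot n, hk1]

lemma ordA_succ (hc0 : c 0 ^ 2 + c 0 + 1 = 0)
    (hrec : ∀ i : ℕ, c (i + 1) ^ 2 + c (i + 1) + ∏ j ∈ Finset.range (i + 1), c j = 0)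
    (hnot : ∀ i : ℕ, c (i + 1) ∉ conwayL c (i + 1)) (n : ℕ)
    (hleast : IsLeast {m : ℕ | 0 < m ∧ c n ^ m ∈ conwayL c n} (fermatN n)) :
    orderOf (∏ j ∈ Finset.range (n+1), c j)
      = (fermatN n * orderOf (∏ j ∈ Finset.range n, c j)) /
        Nat.gcd (fermatN n * orderOf (∏ j ∈ Finset.range n, c j)) (fermatN n + 1) := by
  have hx := cNeZero c hc0 hnot n
  have hpos : 0 < orderOf (c n) := (finOrdC c hc0 hrec hnot n).orderOf_pos
  have hA1 : ∏ j ∈ Finset.range (n+1), c j = c n ^ (fermatN n + 1) := by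
    rw [Finset.prod_range_succ, ← key c hc0 hrec hnot n, ← pow_succ]
  rw [hA1, orderOf_pow' _ (by positivity : fermatN n + 1 ≠ 0),
    order_split hx hleast hpos, key c hc0 hrec hnot n]

lemma ordC_eq (hc0 : c 0 ^ 2 + c 0 + 1 = 0)
    (hrec : ∀ i : ℕ, c (i + 1) ^ 2 + c (i + 1) + ∏ j ∈ Finset.range (i + 1), c j = 0)
    (hnot : ∀ i : ℕ, c (i + 1) ∉ conwayL c (i + 1)) (n : ℕ)
    (hleast : IsLeast {m : ℕ | 0 < m ∧ c n ^ m ∈ conwayL c n} (fermatN n)) :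
    orderOf (c n) = fermatN n * orderOf (∏ j ∈ Finset.range n, c j) := by
  rw [order_split (cNeZero c hc0 hnot n) hleast (finOrdC c hc0 hrec hnot n).orderOf_pos,
    key c hc0 hrec hnot n]

lemma ordC0 (hc0 : c 0 ^ 2 + c 0 + 1 = 0) : orderOf (c 0) = 3 := by
  haveI : Fact (Nat.Prime 3) := ⟨by norm_num⟩
  have hcube : c 0 ^ 3 = 1 := by
    linear_combination (c 0 + 1) * hc0 - (c 0 ^ 2 + c 0 + 1) * two_eq_zero
  have hne1 : c 0 ≠ 1 := by
    intro h
    rw [h] at hc0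
    apply one_ne_zero (α := F2b)
    linear_combination hc0 - two_eq_zero
  exact orderOf_eq_prime hcube hne1

lemma fermat_prod (m : ℕ) : ∏ j ∈ Finset.range m, fermatN j = 2 ^ 2 ^ m - 1 := by
  induction m with
  | zero => simp
  | succ m ih =>
    rw [Finset.prod_range_succ, ih]
    have h1 : (1:ℕ) ≤ 2 ^ 2 ^ m := Nat.one_le_two_pow
    have h2 : 2 ^ 2 ^ (m+1) = 2 ^ 2 ^ m * 2 ^ 2 ^ m := by
      rw [← pow_add, pow_succ, mul_two]
    have h3 : (1:ℕ) ≤ 2 ^ 2 ^ (m+1) := Nat.one_le_two_pow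
    rw [fermatN, h2] at *
    zify [h1, h3]
    ring

lemma coprime_three (k : ℕ) (hk : 1 ≤ k) : Nat.Coprime 3 (fermatN k) := by
  have h : 2 ^ 2 ^ k % 3 = 1 := by
    obtain ⟨t, ht⟩ : ∃ t, 2 ^ k = 2 * t := ⟨2 ^ (k-1), by
      nth_rewrite 1 [show k = 1 + (k-1) by omega]; rw [pow_add, pow_one]⟩
    rw [ht, pow_mul, Nat.pow_mod]
    norm_num
  have := Nat.Prime.coprime_iff_not_dvd (p := 3) (by norm_num) (n := fermatN k)
  rw [this, fermatN]
  omega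

lemma fermat_coprime {k m : ℕ} (hk : 1 ≤ k) (hkm : k ≤ m) :
    Nat.Coprime (fermatN k) (fermatN m + 1) := by
  rcases eq_or_lt_of_le hkm with rfl | hlt
  · simpa using Nat.coprime_succ_self_right (n := fermatN k)
  · have hdvd : fermatN k ∣ 2 ^ 2 ^ m - 1 := by
      rw [← fermat_prod]
      exact Finset.dvd_prod_of_mem _ (Finset.mem_range.mpr hlt)
    rw [Nat.coprime_iff_gcd_eq_one]
    set g := Nat.gcd (fermatN k) (fermatN m + 1) with hg
    have hg1 : g ∣ fermatN k := Nat.gcd_dvd_left _ _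
    have hg2 : g ∣ fermatN m + 1 := Nat.gcd_dvd_right _ _
    have hg3 : g ∣ 3 := by
      have h3 : fermatN m + 1 - (2 ^ 2 ^ m - 1) = 3 := by
        have : (1:ℕ) ≤ 2 ^ 2 ^ m := Nat.one_le_two_pow
        rw [fermatN]; omega
      exact h3 ▸ Nat.dvd_sub hg2 (hg1.trans hdvd)
    have : g ∣ Nat.gcd 3 (fermatN k) := Nat.dvd_gcd hg3 hg1
    rwa [(coprime_three k hk), Nat.dvd_one] at this

lemma prodN_coprime {m : ℕ} (hm : 1 ≤ m) :
    Nat.Coprime (∏ j ∈ Finset.Icc 1 m, fermatN j) (fermatN m + 1) :=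
  Nat.Coprime.prod_left fun k hk => fermat_coprime (Finset.mem_Icc.mp hk).1 (Finset.mem_Icc.mp hk).2

end ConwayAux

/-- Let `i ≥ 5`, and suppose that for every `j` with `5 ≤ j ≤ i`, the Fermat
number `N_j` is the smallest positive integer `m` with `(c_j)^m ∈ L_{j−1}`
(here `conwayL c j` denotes `L_{j-1}`). Then
`O(a_i) = O(c_i) = ∏_{j=1}^{i} N_j`, where `a_i = ∏_{j=0}^{i} c_j`. -/
theorem conway_order_eq_of_minimal (c : ℕ → AlgebraicClosure (ZMod 2))
    (hc0 : c 0 ^ 2 + c 0 + 1 = 0)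
    (hrec : ∀ i : ℕ, c (i + 1) ^ 2 + c (i + 1) + ∏ j ∈ Finset.range (i + 1), c j = 0)
    (hnot : ∀ i : ℕ, c (i + 1) ∉ conwayL c (i + 1))
    (i : ℕ) (hi : 5 ≤ i)
    (hmin : ∀ j : ℕ, 5 ≤ j → j ≤ i →
      IsLeast {m : ℕ | 0 < m ∧ c j ^ m ∈ conwayL c j} (fermatN j)) :
    orderOf (∏ j ∈ Finset.range (i + 1), c j) = ∏ j ∈ Finset.Icc 1 i, fermatN j ∧
    orderOf (c i) = ∏ j ∈ Finset.Icc 1 i, fermatN j := by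
  classical
  have hleast : ∀ n, 1 ≤ n → n ≤ i →
      IsLeast {m : ℕ | 0 < m ∧ c n ^ m ∈ conwayL c n} (fermatN n) := by
    intro n h1 h2
    by_cases h5 : 5 ≤ n
    · exact hmin n h5 h2
    · have hprime : (fermatN n).Prime := by
        interval_cases n <;> norm_num [fermatN]
      have hmem : c n ^ fermatN n ∈ conwayL c n := by
        rw [ConwayAux.key c hc0 hrec hnot n]
        exact ConwayAux.prodMem c n
      have hS : fermatN n ∈ {m : ℕ | 0 < m ∧ c n ^ m ∈ conwayL c n} :=
        ⟨by unfold fermatN; positivity, hmem⟩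
      have hne' : {m : ℕ | 0 < m ∧ c n ^ m ∈ conwayL c n}.Nonempty := ⟨_, hS⟩
      have hld : IsLeast {m : ℕ | 0 < m ∧ c n ^ m ∈ conwayL c n}
          (sInf {m : ℕ | 0 < m ∧ c n ^ m ∈ conwayL c n}) :=
        ⟨Nat.sInf_mem hne', fun m hm => Nat.sInf_le hm⟩
      have hdvd : sInf {m : ℕ | 0 < m ∧ c n ^ m ∈ conwayL c n} ∣ fermatN n :=
        ConwayAux.least_dvd (ConwayAux.cNeZero c hc0 hnot n) hld hS.1 hS.2
      rcases hprime.eq_one_or_self_of_dvd _ hdvd with h | h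
      · exfalso
        have hmem1 := hld.1.2
        rw [h, pow_one] at hmem1
        exact ConwayAux.notMem c hc0 hnot n hmem1
      · rwa [h] at hld
  have hA : ∀ n, 1 ≤ n → n ≤ i →
      orderOf (∏ j ∈ Finset.range (n+1), c j) = ∏ j ∈ Finset.Icc 1 n, fermatN j := by
    intro n h1
    induction n, h1 using Nat.le_induction with
    | base =>
      intro h2
      rw [ConwayAux.ordA_succ c hc0 hrec hnot 1 (hleast 1 le_rfl h2)]
      rw [Finset.prod_range_one, ConwayAux.ordC0 c hc0, Finset.Icc_self,
        Finset.prod_singleton]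
      norm_num [fermatN]
    | succ n h1 ih =>
      intro h2
      have ihn := ih (by omega)
      rw [ConwayAux.ordA_succ c hc0 hrec hnot (n+1) (hleast (n+1) (by omega) h2), ihn]
      have hT : fermatN (n+1) * ∏ j ∈ Finset.Icc 1 n, fermatN j
          = ∏ j ∈ Finset.Icc 1 (n+1), fermatN j := by
        rw [Finset.prod_Icc_succ_top (by omega), mul_comm]
      rw [hT, Nat.Coprime.gcd_eq_one (ConwayAux.prodN_coprime (by omega)), Nat.div_one]
  constructor
  · exact hA i (by omega) le_rfl
  · obtain ⟨i', rfl⟩ : ∃ i', i = i' + 1 := ⟨i - 1, by omega⟩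
    rw [ConwayAux.ordC_eq c hc0 hrec hnot (i'+1) (hleast (i'+1) (by omega) le_rfl),
      hA i' (by omega) (by omega), Finset.prod_Icc_succ_top (by omega), mul_comm]
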